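/- With c_k = (N!/(2π)^{N/2})·Π_{j=1}^N Γ(1+k)/Γ(1+jk), the sequence c̃_k := c_k · (k/e)^{kN(N-1)/2} · Π_{j=1}^N j^{kj} converges to √(N!)/(2π)^{N/2} as k → ∞. -/

import Mathlib

open Finset Filter

noncomputable def cA (N : ℕ) (k : ℝ) : ℝ :=
  (N.factorial : ℝ) / (2 * Real.pi) ^ ((N : ℝ) / 2) *
    ∏ j ∈ Finset.range N, Real.Gamma (1 + k) / Real.Gamma (1 + ((j : ℝ) + 1) * k)

open Real Topology

noncomputable def gS (x : ℝ) : ℝ := Real.sqrt (2 * Real.pi * x) * (x / Real.exp 1) ^ x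

lemma gS_pos {x : ℝ} (hx : 0 < x) : 0 < gS x := by
  unfold gS
  have := Real.pi_pos
  positivity

lemma pow_bound {x y : ℝ} (hx : 0 < x) (hxy : x ≤ y) :
    x ^ y * Real.exp (y - x) ≤ y ^ y := by
  have hy : 0 < y := lt_of_lt_of_le hx hxy
  have h := Real.log_le_sub_one_of_pos (div_pos hx hy)
  rw [Real.log_div hx.ne' hy.ne'] at h
  have h2 : y * Real.log x + (y - x) ≤ y * Real.log y := by
    have h3 := mul_le_mul_of_nonneg_left h hy.le
    have h4 : y * (x / y - 1) = x - y := by field_simp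
    nlinarith [h3, h4]
  calc x ^ y * Real.exp (y - x) = Real.exp (y * Real.log x + (y - x)) := by
        rw [Real.rpow_def_of_pos hx, ← Real.exp_add, mul_comm (Real.log x)]
    _ ≤ Real.exp (y * Real.log y) := Real.exp_le_exp.2 h2
    _ = y ^ y := by rw [Real.rpow_def_of_pos hy, mul_comm]

lemma gS_mono {x y : ℝ} (hx : 1 ≤ x) (hxy : x ≤ y) :
    gS x * x ^ (y - x) ≤ gS y := by
  have hx0 : 0 < x := lt_of_lt_of_le one_pos hx
  have hy0 : 0 < y := lt_of_lt_of_le hx0 hxy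
  have h1 : Real.sqrt (2 * Real.pi * x) ≤ Real.sqrt (2 * Real.pi * y) := by
    apply Real.sqrt_le_sqrt
    nlinarith [Real.pi_pos]
  have h2 : (x / Real.exp 1) ^ x * x ^ (y - x) ≤ (y / Real.exp 1) ^ y := by
    rw [Real.div_rpow hx0.le (Real.exp_pos 1).le, Real.div_rpow hy0.le (Real.exp_pos 1).le,
      Real.exp_one_rpow, Real.exp_one_rpow, div_mul_eq_mul_div, ← Real.rpow_add hx0]
    rw [div_le_div_iff₀ (Real.exp_pos x) (Real.exp_pos y)]
    have : x ^ (x + (y - x)) * Real.exp y = (x ^ y * Real.exp (y - x)) * Real.exp x := by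
      rw [mul_assoc, ← Real.exp_add, add_sub_cancel]
      ring_nf
    rw [this]
    exact mul_le_mul_of_nonneg_right (pow_bound hx0 hxy) (Real.exp_pos x).le
  unfold gS
  rw [mul_assoc]
  exact mul_le_mul h1 h2 (by positivity) (Real.sqrt_nonneg _)

lemma Gamma_interp {a b s t : ℝ} (ha : 0 < a) (hb : 0 < b) (hs : 0 ≤ s) (ht : 0 ≤ t)
    (hst : s + t = 1) : Real.Gamma (s * a + t * b) ≤ Real.Gamma a ^ s * Real.Gamma b ^ t := by
  rcases eq_or_lt_of_le hs with hs0 | hs0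
  · simp only [← hs0, zero_mul, zero_add, Real.rpow_zero, one_mul]
    have : t = 1 := by linarith
    simp [this]
  rcases eq_or_lt_of_le ht with ht0 | ht0
  · simp only [← ht0, zero_mul, add_zero, Real.rpow_zero, mul_one]
    have : s = 1 := by linarith
    simp [this]
  exact Real.Gamma_mul_add_mul_le_rpow_Gamma_mul_rpow_Gamma ha hb hs0 ht0 hst

lemma Gamma_upper {n : ℕ} {x : ℝ} (hx1 : (n : ℝ) ≤ x) (hx2 : x ≤ (n : ℝ) + 1) :
    Real.Gamma (1 + x) ≤ (n.factorial : ℝ) * ((n : ℝ) + 1) ^ (x - n) := by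
  set t : ℝ := x - n with ht
  have ht0 : 0 ≤ t := by simp [ht]; linarith
  have ht1 : t ≤ 1 := by simp [ht]; linarith
  have key : Real.Gamma (1 + x) ≤ Real.Gamma ((n : ℝ) + 1) ^ (1 - t) * Real.Gamma ((n : ℝ) + 2) ^ t := by
    have h := Gamma_interp (a := (n : ℝ) + 1) (b := (n : ℝ) + 2) (s := 1 - t) (t := t)
      (by positivity) (by positivity) (by linarith) ht0 (by ring)
    have e : (1 - t) * ((n : ℝ) + 1) + t * ((n : ℝ) + 2) = 1 + x := by rw [ht]; ring
    rwa [e] at h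
  have g1 : Real.Gamma ((n : ℝ) + 1) = (n.factorial : ℝ) := Real.Gamma_nat_eq_factorial n
  have g2 : Real.Gamma ((n : ℝ) + 2) = ((n + 1).factorial : ℝ) := by
    have := Real.Gamma_nat_eq_factorial (n + 1)
    rw [← this]; push_cast; ring_nf
  rw [g1, g2] at key
  have fp : (0 : ℝ) < (n.factorial : ℝ) := by exact_mod_cast n.factorial_pos
  have e2 : ((n + 1).factorial : ℝ) = (n.factorial : ℝ) * ((n : ℝ) + 1) := by
    push_cast [Nat.factorial_succ]; ring
  calc Real.Gamma (1 + x) ≤ (n.factorial : ℝ) ^ (1 - t) * ((n + 1).factorial : ℝ) ^ t := key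
    _ = (n.factorial : ℝ) * ((n : ℝ) + 1) ^ t := by
        rw [e2, Real.mul_rpow fp.le (by positivity), ← mul_assoc,
          ← Real.rpow_add fp, sub_add_cancel, Real.rpow_one]

lemma Gamma_lower {n : ℕ} {x : ℝ} (hx1 : (n : ℝ) ≤ x) (hx2 : x ≤ (n : ℝ) + 1) :
    ((n + 1).factorial : ℝ) ≤ Real.Gamma (1 + x) * (1 + x) ^ (1 - (x - n)) := by
  have hx0 : 0 ≤ x := le_trans (by positivity) hx1
  set t : ℝ := x - n with ht
  have ht0 : 0 ≤ t := by simp [ht]; linarith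
  have ht1 : t ≤ 1 := by simp [ht]; linarith
  have hgp : 0 < Real.Gamma (1 + x) := Real.Gamma_pos_of_pos (by linarith)
  have key : Real.Gamma ((n : ℝ) + 2) ≤ Real.Gamma (1 + x) ^ t * Real.Gamma (2 + x) ^ (1 - t) := by
    have h := Gamma_interp (a := 1 + x) (b := 2 + x) (s := t) (t := 1 - t)
      (by linarith) (by linarith) ht0 (by linarith) (by ring)
    have e : t * (1 + x) + (1 - t) * (2 + x) = (n : ℝ) + 2 := by rw [ht]; ring
    rwa [e] at h
  have g2 : Real.Gamma ((n : ℝ) + 2) = ((n + 1).factorial : ℝ) := by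
    have := Real.Gamma_nat_eq_factorial (n + 1)
    rw [← this]; push_cast; ring_nf
  have gadd : Real.Gamma (2 + x) = (1 + x) * Real.Gamma (1 + x) := by
    have := Real.Gamma_add_one (s := 1 + x) (by positivity)
    rw [← this]; ring_nf
  rw [g2, gadd] at key
  calc ((n + 1).factorial : ℝ) ≤ Real.Gamma (1 + x) ^ t * ((1 + x) * Real.Gamma (1 + x)) ^ (1 - t) := key
    _ = Real.Gamma (1 + x) * (1 + x) ^ (1 - t) := by
        rw [Real.mul_rpow (by positivity) hgp.le]
        rw [show Real.Gamma (1 + x) ^ t * ((1 + x) ^ (1 - t) * Real.Gamma (1 + x) ^ (1 - t))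
            = (Real.Gamma (1 + x) ^ t * Real.Gamma (1 + x) ^ (1 - t)) * (1 + x) ^ (1 - t) by ring,
          ← Real.rpow_add hgp, add_sub_cancel, Real.rpow_one]

lemma F_nat : Tendsto (fun n : ℕ => (n.factorial : ℝ) / gS n) atTop (𝓝 1) := by
  have heq : ∀ n : ℕ, (n.factorial : ℝ) / gS n = Stirling.stirlingSeq n / Real.sqrt Real.pi := by
    intro n
    unfold gS Stirling.stirlingSeq
    rw [Real.rpow_natCast, show 2 * Real.pi * (n : ℝ) = Real.pi * (2 * n) by ring,
      Real.sqrt_mul Real.pi_pos.le, div_div]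
    congr 1; ring
  have h := Stirling.tendsto_stirlingSeq_sqrt_pi.div_const (Real.sqrt Real.pi)
  rw [div_self (by positivity : Real.sqrt Real.pi ≠ 0)] at h
  exact h.congr fun n => (heq n).symm

lemma F_tendsto : Tendsto (fun x : ℝ => Real.Gamma (1 + x) / gS x) atTop (𝓝 1) := by
  have hU : Tendsto (fun n : ℕ => ((n.factorial : ℝ) / gS n) * (1 + 1 / n)) atTop (𝓝 1) := by
    have h2 : Tendsto (fun n : ℕ => 1 + 1 / (n : ℝ)) atTop (𝓝 (1 + 0)) :=
      tendsto_const_nhds.add tendsto_one_div_atTop_nhds_zero_nat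
    simpa using F_nat.mul h2
  have hL : Tendsto (fun n : ℕ => (((n + 1).factorial : ℝ) / gS ((n : ℝ) + 1)) *
      ((n : ℝ) / ((n : ℝ) + 2))) atTop (𝓝 1) := by
    have h1 : Tendsto (fun n : ℕ => ((n + 1).factorial : ℝ) / gS ((n : ℝ) + 1)) atTop (𝓝 1) := by
      have := F_nat.comp (tendsto_add_atTop_nat 1)
      refine this.congr fun n => ?_
      simp only [Function.comp_apply]
      push_cast
      ring_nf
    have h2 : Tendsto (fun n : ℕ => (n : ℝ) / ((n : ℝ) + 2)) atTop (𝓝 1) :=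
      tendsto_natCast_div_add_atTop (2 : ℝ)
    simpa using h1.mul h2
  refine tendsto_of_tendsto_of_tendsto_of_le_of_le'
    (hL.comp tendsto_nat_floor_atTop) (hU.comp tendsto_nat_floor_atTop) ?_ ?_
  · filter_upwards [eventually_ge_atTop (2 : ℝ)] with x hx
    set n : ℕ := ⌊x⌋₊ with hn
    have hx0 : (0 : ℝ) ≤ x := by linarith
    have hn2 : 2 ≤ n := Nat.le_floor (by exact_mod_cast hx)
    have hn1 : (1 : ℝ) ≤ (n : ℝ) := by exact_mod_cast Nat.one_le_of_lt (by omega : 1 < n)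
    have hnx : (n : ℝ) ≤ x := Nat.floor_le hx0
    have hxn1 : x < (n : ℝ) + 1 := Nat.lt_floor_add_one x
    set s : ℝ := 1 - (x - n) with hs
    have hs0 : 0 ≤ s := by simp [hs]; linarith
    have hs1 : s ≤ 1 := by simp [hs]; linarith
    have hxpos : (0 : ℝ) < x := by linarith
    have hgx : 0 < gS x := gS_pos hxpos
    have hgn1 : 0 < gS ((n : ℝ) + 1) := gS_pos (by linarith)
    have hG : 0 < Real.Gamma (1 + x) := Real.Gamma_pos_of_pos (by linarith)
    -- key inequalities
    have hA : ((n + 1).factorial : ℝ) ≤ Real.Gamma (1 + x) * (1 + x) ^ s :=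
      Gamma_lower hnx hxn1.le
    have hC : gS x * x ^ s ≤ gS ((n : ℝ) + 1) := by
      have := gS_mono (le_trans hn1 hnx) hxn1.le
      rwa [show (n : ℝ) + 1 - x = s by rw [hs]; ring] at this
    have hbase0 : 0 < x / (1 + x) := by positivity
    have hbase1 : x / (1 + x) ≤ 1 := by
      rw [div_le_one (by linarith)]; linarith
    have hD : (n : ℝ) / ((n : ℝ) + 2) ≤ (x / (1 + x)) ^ s := by
      calc (n : ℝ) / ((n : ℝ) + 2) ≤ x / (1 + x) := by
            rw [div_le_div_iff₀ (by linarith) (by linarith)]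
            nlinarith
        _ = (x / (1 + x)) ^ (1 : ℝ) := (Real.rpow_one _).symm
        _ ≤ (x / (1 + x)) ^ s := Real.rpow_le_rpow_of_exponent_ge hbase0 hbase1 hs1
    -- combine
    show (((n + 1).factorial : ℝ) / gS ((n : ℝ) + 1)) * ((n : ℝ) / ((n : ℝ) + 2))
        ≤ Real.Gamma (1 + x) / gS x
    rw [div_mul_eq_mul_div, div_le_div_iff₀ hgn1 hgx]
    have k1 : ((n + 1).factorial : ℝ) * ((n : ℝ) / ((n : ℝ) + 2))
        ≤ (Real.Gamma (1 + x) * (1 + x) ^ s) * (x / (1 + x)) ^ s :=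
      mul_le_mul hA hD (by positivity) (by positivity)
    have k2 : (Real.Gamma (1 + x) * (1 + x) ^ s) * (x / (1 + x)) ^ s
        = Real.Gamma (1 + x) * x ^ s := by
      rw [mul_assoc, ← Real.mul_rpow (by linarith) hbase0.le]
      congr 2
      field_simp
    have k3 : Real.Gamma (1 + x) * x ^ s * gS x ≤ Real.Gamma (1 + x) * gS ((n : ℝ) + 1) := by
      rw [mul_assoc]
      refine mul_le_mul_of_nonneg_left ?_ hG.le
      rw [mul_comm] at hC
      exact hC
    calc ((n + 1).factorial : ℝ) * ((n : ℝ) / ((n : ℝ) + 2)) * gS x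
        ≤ Real.Gamma (1 + x) * x ^ s * gS x := by
          refine mul_le_mul_of_nonneg_right ?_ hgx.le
          rw [← k2]; exact k1
      _ ≤ Real.Gamma (1 + x) * gS ((n : ℝ) + 1) := k3
  · filter_upwards [eventually_ge_atTop (2 : ℝ)] with x hx
    set n : ℕ := ⌊x⌋₊ with hn
    have hx0 : (0 : ℝ) ≤ x := by linarith
    have hn2 : 2 ≤ n := Nat.le_floor (by exact_mod_cast hx)
    have hn1 : (1 : ℝ) ≤ (n : ℝ) := by exact_mod_cast Nat.one_le_of_lt (by omega : 1 < n)
    have hnpos : (0 : ℝ) < (n : ℝ) := by linarith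
    have hnx : (n : ℝ) ≤ x := Nat.floor_le hx0
    have hxn1 : x < (n : ℝ) + 1 := Nat.lt_floor_add_one x
    set t : ℝ := x - n with ht
    have ht0 : 0 ≤ t := by simp [ht]; linarith
    have ht1 : t ≤ 1 := by simp [ht]; linarith
    have hxpos : (0 : ℝ) < x := by linarith
    have hgx : 0 < gS x := gS_pos hxpos
    have hgn : 0 < gS (n : ℝ) := gS_pos hnpos
    have hA : Real.Gamma (1 + x) ≤ (n.factorial : ℝ) * ((n : ℝ) + 1) ^ t :=
      Gamma_upper hnx hxn1.le
    have hB : gS (n : ℝ) * (n : ℝ) ^ t ≤ gS x := by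
      have := gS_mono hn1 hnx
      rwa [← ht] at this
    show Real.Gamma (1 + x) / gS x
        ≤ ((n.factorial : ℝ) / gS (n : ℝ)) * (1 + 1 / (n : ℝ))
    have step1 : Real.Gamma (1 + x) / gS x
        ≤ ((n.factorial : ℝ) * ((n : ℝ) + 1) ^ t) / (gS (n : ℝ) * (n : ℝ) ^ t) := by
      apply div_le_div₀ (by positivity) hA (by positivity) hB
    have step2 : ((n.factorial : ℝ) * ((n : ℝ) + 1) ^ t) / (gS (n : ℝ) * (n : ℝ) ^ t)
        = ((n.factorial : ℝ) / gS (n : ℝ)) * ((((n : ℝ) + 1) / (n : ℝ)) ^ t) := by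
      rw [Real.div_rpow (by positivity) hnpos.le, div_mul_div_comm]
    have step3 : (((n : ℝ) + 1) / (n : ℝ)) ^ t ≤ 1 + 1 / (n : ℝ) := by
      have hb1 : 1 ≤ ((n : ℝ) + 1) / (n : ℝ) := by
        rw [le_div_iff₀ hnpos]; linarith
      calc (((n : ℝ) + 1) / (n : ℝ)) ^ t ≤ (((n : ℝ) + 1) / (n : ℝ)) ^ (1 : ℝ) :=
            Real.rpow_le_rpow_of_exponent_le hb1 ht1
        _ = 1 + 1 / (n : ℝ) := by rw [Real.rpow_one]; field_simp
    calc Real.Gamma (1 + x) / gS x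
        ≤ ((n.factorial : ℝ) / gS (n : ℝ)) * ((((n : ℝ) + 1) / (n : ℝ)) ^ t) := by
          rw [← step2]; exact step1
      _ ≤ ((n.factorial : ℝ) / gS (n : ℝ)) * (1 + 1 / (n : ℝ)) :=
          mul_le_mul_of_nonneg_left step3 (by positivity)

lemma prod_rpow_mul (b : ℝ) (hb : 0 < b) (k : ℝ) (N : ℕ) :
    ∏ j ∈ Finset.range N, b ^ (k * (j : ℝ)) = b ^ (k * (N : ℝ) * ((N : ℝ) - 1) / 2) := by
  induction N with
  | zero => simp
  | succ n ih =>
    rw [Finset.prod_range_succ, ih, ← Real.rpow_add hb]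
    congr 1
    push_cast
    ring

lemma prod_inv_sqrt (N : ℕ) :
    ∏ j ∈ Finset.range N, ((j : ℝ) + 1) ^ (-(1 / 2) : ℝ)
      = (N.factorial : ℝ) ^ (-(1 / 2) : ℝ) := by
  induction N with
  | zero => simp
  | succ n ih =>
    rw [Finset.prod_range_succ, ih, ← Real.mul_rpow (by positivity) (by positivity)]
    congr 1
    push_cast [Nat.factorial_succ]
    ring

lemma gS_ratio {k : ℝ} (hk : 0 < k) (j : ℕ) :
    gS (((j : ℝ) + 1) * k) = gS k * ((j : ℝ) + 1) ^ ((1 : ℝ) / 2) *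
      (k / Real.exp 1) ^ (k * (j : ℝ)) * ((j : ℝ) + 1) ^ (k * ((j : ℝ) + 1)) := by
  set p : ℝ := (j : ℝ) + 1 with hp
  have hp0 : 0 < p := by positivity
  unfold gS
  have h1 : Real.sqrt (2 * Real.pi * (p * k)) = Real.sqrt (2 * Real.pi * k) * p ^ ((1:ℝ)/2) := by
    rw [show 2 * Real.pi * (p * k) = (2 * Real.pi * k) * p by ring,
      Real.sqrt_mul (by positivity), Real.sqrt_eq_rpow p]
  have h2 : (p * k / Real.exp 1) ^ (p * k)
      = p ^ (k * p) * ((k / Real.exp 1) ^ (k * (j : ℝ)) * (k / Real.exp 1) ^ k) := by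
    rw [show p * k / Real.exp 1 = p * (k / Real.exp 1) by ring,
      Real.mul_rpow hp0.le (by positivity), show p * k = k * p by ring,
      ← Real.rpow_add (by positivity), show k * (j:ℝ) + k = k * p by rw [hp]; ring]
  rw [h1, h2, show k * p = k * ((j:ℝ) + 1) by rw [hp]]
  ring

theorem stmt_17 (N : ℕ) :
    Tendsto
      (fun k : ℝ => cA N k * (k / Real.exp 1) ^ (k * N * (N - 1) / 2) *
        ∏ j ∈ Finset.range N, ((j : ℝ) + 1) ^ (k * ((j : ℝ) + 1)))
      atTop
      (nhds (Real.sqrt (N.factorial : ℝ) / (2 * Real.pi) ^ ((N : ℝ) / 2))) := by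
  set C : ℝ := Real.sqrt (N.factorial : ℝ) / (2 * Real.pi) ^ ((N : ℝ) / 2) with hC
  have hlim : Tendsto (fun k : ℝ => C * ∏ j ∈ Finset.range N,
      ((Real.Gamma (1 + k) / gS k) /
        (Real.Gamma (1 + ((j : ℝ) + 1) * k) / gS (((j : ℝ) + 1) * k))))
      atTop (𝓝 C) := by
    have hprod : Tendsto (fun k : ℝ => ∏ j ∈ Finset.range N,
        ((Real.Gamma (1 + k) / gS k) /
          (Real.Gamma (1 + ((j : ℝ) + 1) * k) / gS (((j : ℝ) + 1) * k))))
        atTop (𝓝 (∏ _j ∈ Finset.range N, (1 : ℝ))) := by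
      refine tendsto_finset_prod _ (fun j _ => ?_)
      have h2 : Tendsto (fun k : ℝ => ((j : ℝ) + 1) * k) atTop atTop :=
        Tendsto.const_mul_atTop (by positivity) tendsto_id
      have h3 := F_tendsto.comp h2
      have h4 := F_tendsto.div h3 one_ne_zero
      rw [div_one] at h4; exact h4
    rw [Finset.prod_const_one] at hprod
    simpa using tendsto_const_nhds.mul hprod
  refine Tendsto.congr' ?_ hlim
  filter_upwards [eventually_gt_atTop (0 : ℝ)] with k hk
  have hG1 : 0 < Real.Gamma (1 + k) := Real.Gamma_pos_of_pos (by linarith)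
  have hgk : 0 < gS k := gS_pos hk
  have key : ∀ j ∈ Finset.range N,
      Real.Gamma (1 + k) / Real.Gamma (1 + ((j : ℝ) + 1) * k) *
        ((k / Real.exp 1) ^ (k * (j : ℝ)) * ((j : ℝ) + 1) ^ (k * ((j : ℝ) + 1)))
      = ((Real.Gamma (1 + k) / gS k) /
          (Real.Gamma (1 + ((j : ℝ) + 1) * k) / gS (((j : ℝ) + 1) * k))) *
        ((j : ℝ) + 1) ^ (-(1 / 2) : ℝ) := by
    intro j _
    have hp0 : (0 : ℝ) < (j : ℝ) + 1 := by positivity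
    have hpk : (0 : ℝ) < ((j : ℝ) + 1) * k := by positivity
    have hG2 : 0 < Real.Gamma (1 + ((j : ℝ) + 1) * k) := Real.Gamma_pos_of_pos (by linarith)
    have hgpk : 0 < gS (((j : ℝ) + 1) * k) := gS_pos hpk
    rw [Real.rpow_neg hp0.le]
    rw [gS_ratio hk j] at hgpk ⊢
    have hr1 : (0 : ℝ) < ((j : ℝ) + 1) ^ ((1 : ℝ) / 2) := by positivity
    have hr2 : (0 : ℝ) < (k / Real.exp 1) ^ (k * (j : ℝ)) := by positivity
    have hr3 : (0 : ℝ) < ((j : ℝ) + 1) ^ (k * ((j : ℝ) + 1)) := by positivity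
    field_simp
  calc C * ∏ j ∈ Finset.range N,
        ((Real.Gamma (1 + k) / gS k) /
          (Real.Gamma (1 + ((j : ℝ) + 1) * k) / gS (((j : ℝ) + 1) * k)))
      = (N.factorial : ℝ) / (2 * Real.pi) ^ ((N : ℝ) / 2) *
          ∏ j ∈ Finset.range N,
            (((Real.Gamma (1 + k) / gS k) /
              (Real.Gamma (1 + ((j : ℝ) + 1) * k) / gS (((j : ℝ) + 1) * k))) *
              ((j : ℝ) + 1) ^ (-(1 / 2) : ℝ)) := by
        rw [Finset.prod_mul_distrib, prod_inv_sqrt, hC]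
        have hfac : (0 : ℝ) < (N.factorial : ℝ) := by exact_mod_cast N.factorial_pos
        have hsq : Real.sqrt (N.factorial : ℝ)
            = (N.factorial : ℝ) * (N.factorial : ℝ) ^ (-(1 / 2) : ℝ) := by
          rw [Real.sqrt_eq_rpow]
          nth_rewrite 2 [← Real.rpow_one (N.factorial : ℝ)]
          rw [← Real.rpow_add hfac]
          norm_num
        rw [hsq]
        ring
    _ = (N.factorial : ℝ) / (2 * Real.pi) ^ ((N : ℝ) / 2) *
          ∏ j ∈ Finset.range N,
            (Real.Gamma (1 + k) / Real.Gamma (1 + ((j : ℝ) + 1) * k) *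
              ((k / Real.exp 1) ^ (k * (j : ℝ)) * ((j : ℝ) + 1) ^ (k * ((j : ℝ) + 1)))) := by
        rw [Finset.prod_congr rfl key]
    _ = cA N k * (k / Real.exp 1) ^ (k * N * (N - 1) / 2) *
        ∏ j ∈ Finset.range N, ((j : ℝ) + 1) ^ (k * ((j : ℝ) + 1)) := by
        unfold cA
        rw [Finset.prod_mul_distrib, Finset.prod_mul_distrib,
          prod_rpow_mul _ (by positivity) k N]
        ring
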